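/- Let t ∈ ℂ and let a₁, a₂ ∈ SL(2,ℂ) with a₁ ≠ ±e, a₂ ≠ ±e and tr(a₁) = tr(a₂) = t. Then there exists a nonzero vector v ∈ ℂ² that is an eigenvector of both a₁ and a₂ if and only if tr(a₁a₂) = 2 or tr(a₁a₂) = t² − 2. -/

import Mathlib

/-- The trace of an element of SL(2,ℂ). -/
noncomputable def trSL (A : Matrix.SpecialLinearGroup (Fin 2) ℂ) : ℂ :=
  Matrix.trace (A : Matrix (Fin 2) (Fin 2) ℂ)

/-- A nonzero 2×2 matrix over ℂ has kernel of dimension ≤ 1: any two kernel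
vectors are proportional. -/
lemma ker_prop (M : Matrix (Fin 2) (Fin 2) ℂ) (hM : M ≠ 0) (u v : Fin 2 → ℂ)
    (hu : M.mulVec u = 0) (hv : M.mulVec v = 0) (hv0 : v ≠ 0) :
    ∃ c : ℂ, u = c • v := by
  have hu0 := congrFun hu 0
  have hu1 := congrFun hu 1
  have hv0' := congrFun hv 0
  have hv1 := congrFun hv 1
  simp only [Matrix.mulVec, dotProduct, Fin.sum_univ_two, Pi.zero_apply] at hu0 hu1 hv0' hv1
  have hD : u 0 * v 1 - u 1 * v 0 = 0 := by
    by_contra hD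
    apply hM
    ext i j
    fin_cases i <;> fin_cases j <;> simp only [Matrix.zero_apply]
    · have h : M 0 0 * (u 0 * v 1 - u 1 * v 0) = 0 := by linear_combination v 1 * hu0 - u 1 * hv0'
      rcases mul_eq_zero.mp h with h' | h'
      · exact h'
      · exact absurd h' hD
    · have h : M 0 1 * (u 0 * v 1 - u 1 * v 0) = 0 := by linear_combination u 0 * hv0' - v 0 * hu0
      rcases mul_eq_zero.mp h with h' | h'
      · exact h'
      · exact absurd h' hD
    · have h : M 1 0 * (u 0 * v 1 - u 1 * v 0) = 0 := by linear_combination v 1 * hu1 - u 1 * hv1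
      rcases mul_eq_zero.mp h with h' | h'
      · exact h'
      · exact absurd h' hD
    · have h : M 1 1 * (u 0 * v 1 - u 1 * v 0) = 0 := by linear_combination u 0 * hv1 - v 0 * hu1
      rcases mul_eq_zero.mp h with h' | h'
      · exact h'
      · exact absurd h' hD
  have hv' : v 0 ≠ 0 ∨ v 1 ≠ 0 := by
    by_contra h
    push_neg at h
    apply hv0
    ext i
    fin_cases i
    · exact h.1
    · exact h.2
  rcases hv' with h0 | h1
  · refine ⟨u 0 / v 0, ?_⟩
    ext i
    fin_cases i
    · simp only [Pi.smul_apply, smul_eq_mul, Fin.zero_eta, Fin.mk_one]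
      field_simp
    · simp only [Pi.smul_apply, smul_eq_mul, Fin.zero_eta, Fin.mk_one]
      field_simp
      linear_combination -hD
  · refine ⟨u 1 / v 1, ?_⟩
    ext i
    fin_cases i
    · simp only [Pi.smul_apply, smul_eq_mul, Fin.zero_eta, Fin.mk_one]
      field_simp
      linear_combination hD
    · simp only [Pi.smul_apply, smul_eq_mul, Fin.zero_eta, Fin.mk_one]
      field_simp

/-- Polarized Cayley–Hamilton: `X` almost anticommutes with the commutator `[X, Y]`. -/
lemma anticomm_comm (X Y : Matrix (Fin 2) (Fin 2) ℂ) :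
    X * (X * Y - Y * X) + (X * Y - Y * X) * X = X.trace • (X * Y - Y * X) := by
  ext i j
  fin_cases i <;> fin_cases j <;>
    simp only [Fin.mk_zero, Fin.mk_one, Fin.isValue, Matrix.add_apply, Matrix.sub_apply,
      Matrix.mul_apply, Matrix.smul_apply, Matrix.trace_fin_two, Fin.sum_univ_two,
      smul_eq_mul] <;> ring

/-- A traceless 2×2 matrix with zero determinant squares to zero. -/
lemma sq_eq_zero (C : Matrix (Fin 2) (Fin 2) ℂ) (htr : C.trace = 0) (hdet : C.det = 0) :
    C * C = 0 := by
  rw [Matrix.trace_fin_two] at htr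
  rw [Matrix.det_fin_two] at hdet
  ext i j
  fin_cases i <;> fin_cases j <;>
    simp only [Fin.mk_zero, Fin.mk_one, Fin.isValue, Matrix.mul_apply, Matrix.zero_apply,
      Fin.sum_univ_two]
  · linear_combination C 0 0 * htr - hdet
  · linear_combination C 0 1 * htr
  · linear_combination C 1 0 * htr
  · linear_combination C 1 1 * htr - hdet

/-- The determinant of the commutator in terms of traces, for matrices in SL(2,ℂ)
with equal traces. -/
lemma det_comm_eq (A B : Matrix (Fin 2) (Fin 2) ℂ) (hA : A.det = 1) (hB : B.det = 1)
    (htr : B.trace = A.trace) :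
    (A * B - B * A).det = -(((A * B).trace - 2) * ((A * B).trace - (A.trace ^ 2 - 2))) := by
  rw [Matrix.det_fin_two] at hA hB
  rw [Matrix.trace_fin_two, Matrix.trace_fin_two] at htr
  simp only [Matrix.det_fin_two, Matrix.trace_fin_two, Matrix.sub_apply, Matrix.mul_apply,
    Fin.sum_univ_two]
  linear_combination
    (-4 * B 0 1 * B 1 0 - 4 * B 0 0 * B 0 0 + 4 * A 1 1 * B 0 0 - A 1 1 * A 1 1
      + 4 * A 0 0 * B 0 0 - 2 * A 0 0 * A 1 1 - A 0 0 * A 0 0) * hA +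
    (4 - A 1 1 * A 1 1 - 2 * A 0 0 * A 1 1 - A 0 0 * A 0 0) * hB +
    (-4 * B 0 0 + A 1 1 * A 1 1 * B 1 1 + A 1 0 * A 1 1 * B 0 1 + A 0 1 * A 1 1 * B 1 0
      + A 0 1 * A 1 0 * B 1 1 - 3 * A 0 1 * A 1 0 * B 0 0 + A 0 1 * A 1 0 * A 1 1
      + 4 * A 0 0 * A 1 1 * B 0 0 - A 0 0 * A 1 1 * A 1 1 + A 0 0 * A 1 0 * B 0 1
      + A 0 0 * A 0 1 * B 1 0 + A 0 0 * A 0 1 * A 1 0 + A 0 0 * A 0 0 * B 0 0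
      - A 0 0 * A 0 0 * A 1 1) * htr

/-- Lemma 2.3(i): a pair `(a₁, a₂) ∈ G(t)²` has a common eigenvector if and only if
`tr(a₁a₂) = 2` or `tr(a₁a₂) = t ^ 2 - 2`. -/
theorem reducible_iff_trace
    (t : ℂ) (a₁ a₂ : Matrix.SpecialLinearGroup (Fin 2) ℂ)
    (h₁1 : (a₁ : Matrix (Fin 2) (Fin 2) ℂ) ≠ 1)
    (h₁2 : (a₁ : Matrix (Fin 2) (Fin 2) ℂ) ≠ -1)
    (h₂1 : (a₂ : Matrix (Fin 2) (Fin 2) ℂ) ≠ 1)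
    (h₂2 : (a₂ : Matrix (Fin 2) (Fin 2) ℂ) ≠ -1)
    (ht₁ : trSL a₁ = t) (ht₂ : trSL a₂ = t) :
    (∃ v : Fin 2 → ℂ, v ≠ 0 ∧
        (∃ μ : ℂ, Matrix.mulVec (a₁ : Matrix (Fin 2) (Fin 2) ℂ) v = μ • v) ∧
        (∃ ν : ℂ, Matrix.mulVec (a₂ : Matrix (Fin 2) (Fin 2) ℂ) v = ν • v)) ↔
      (trSL (a₁ * a₂) = 2 ∨ trSL (a₁ * a₂) = t ^ 2 - 2) := by
  set A : Matrix (Fin 2) (Fin 2) ℂ := (a₁ : Matrix (Fin 2) (Fin 2) ℂ) with hAdef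
  set B : Matrix (Fin 2) (Fin 2) ℂ := (a₂ : Matrix (Fin 2) (Fin 2) ℂ) with hBdef
  have hdetA : A.det = 1 := a₁.2
  have hdetB : B.det = 1 := a₂.2
  have htrA : A.trace = t := ht₁
  have htrB : B.trace = t := ht₂
  have hcoe : trSL (a₁ * a₂) = (A * B).trace := by
    rw [trSL, Matrix.SpecialLinearGroup.coe_mul]
  have hkey : (A * B - B * A).det =
      -((trSL (a₁ * a₂) - 2) * (trSL (a₁ * a₂) - (t ^ 2 - 2))) := by
    rw [hcoe, ← htrA]
    exact det_comm_eq A B hdetA hdetB (htrB.trans htrA.symm)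
  constructor
  · -- common eigenvector ⇒ trace condition
    rintro ⟨v, hv, ⟨μ, hμ⟩, ⟨ν, hν⟩⟩
    have hCv : (A * B - B * A).mulVec v = 0 := by
      rw [Matrix.sub_mulVec, ← Matrix.mulVec_mulVec, ← Matrix.mulVec_mulVec, hν, hμ,
        Matrix.mulVec_smul, Matrix.mulVec_smul, hμ, hν, smul_smul, smul_smul, mul_comm,
        sub_self]
    have hdet0 : (A * B - B * A).det = 0 :=
      Matrix.exists_mulVec_eq_zero_iff.mp ⟨v, hv, hCv⟩
    rw [hdet0] at hkey
    have := mul_eq_zero.mp (by linear_combination hkey :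
      (trSL (a₁ * a₂) - 2) * (trSL (a₁ * a₂) - (t ^ 2 - 2)) = 0)
    rcases this with h | h
    · exact Or.inl (by linear_combination h)
    · exact Or.inr (by linear_combination h)
  · -- trace condition ⇒ common eigenvector
    intro h
    have hdet0 : (A * B - B * A).det = 0 := by
      rcases h with h | h <;> rw [hkey, h] <;> ring
    set C : Matrix (Fin 2) (Fin 2) ℂ := A * B - B * A with hCdef
    by_cases hC : C = 0
    · -- commuting case
      have hcomm : A * B = B * A := by
        have := hC
        rwa [hCdef, sub_eq_zero] at this
      -- find an eigenvalue μ of A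
      obtain ⟨u, hu⟩ := IsAlgClosed.exists_pow_nat_eq (t ^ 2 - 4) (n := 2) (by norm_num)
      set μ : ℂ := (t + u) / 2 with hμdef
      have hμroot : μ * μ - t * μ + 1 = 0 := by
        rw [hμdef]
        linear_combination hu / 4
      set M : Matrix (Fin 2) (Fin 2) ℂ := A - μ • 1 with hMdef
      have hdetM : M.det = 0 := by
        rw [hMdef, Matrix.det_fin_two]
        simp only [Matrix.sub_apply, Matrix.smul_apply, Matrix.one_apply_eq,
          Matrix.one_apply_ne (by decide : (0 : Fin 2) ≠ 1),
          Matrix.one_apply_ne (by decide : (1 : Fin 2) ≠ 0), smul_eq_mul, mul_one, mul_zero]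
        rw [Matrix.det_fin_two] at hdetA
        rw [Matrix.trace_fin_two] at htrA
        linear_combination hdetA + hμroot - μ * htrA
      have hM0 : M ≠ 0 := by
        intro h0
        have hAμ : A = μ • 1 := by rwa [hMdef, sub_eq_zero] at h0
        have hdet : (1 : ℂ) = μ ^ 2 := by
          rw [← hdetA, hAμ, Matrix.det_smul, Matrix.det_one]
          simp
        have : (μ - 1) * (μ + 1) = 0 := by linear_combination -hdet
        rcases mul_eq_zero.mp this with h' | h'
        · have hμ1 : μ = 1 := by linear_combination h'
          apply h₁1
          rw [hAμ, hμ1, one_smul]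
        · have hμ1 : μ = -1 := by linear_combination h'
          apply h₁2
          rw [hAμ, hμ1]
          simp
      obtain ⟨v, hv, hMv⟩ := Matrix.exists_mulVec_eq_zero_iff.mpr hdetM
      have hAv : A.mulVec v = μ • v := by
        have := hMv
        rw [hMdef, Matrix.sub_mulVec, Matrix.smul_mulVec, Matrix.one_mulVec,
          sub_eq_zero] at this
        exact this
      have hMB : M * B = B * M := by
        rw [hMdef, Matrix.sub_mul, Matrix.mul_sub, hcomm, Matrix.smul_mul, Matrix.mul_smul,
          one_mul, mul_one]
      have hMBv : M.mulVec (B.mulVec v) = 0 := by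
        rw [Matrix.mulVec_mulVec, hMB, ← Matrix.mulVec_mulVec, hMv, Matrix.mulVec_zero]
      obtain ⟨ν, hν⟩ := ker_prop M hM0 (B.mulVec v) v hMBv hMv hv
      exact ⟨v, hv, ⟨μ, hAv⟩, ⟨ν, hν⟩⟩
    · -- non-commuting case : C ≠ 0, C² = 0
      have htrC : C.trace = 0 := by
        rw [hCdef, Matrix.trace_sub, Matrix.trace_mul_comm, sub_self]
      have hC2 : C * C = 0 := sq_eq_zero C htrC hdet0
      -- pick a nonzero column of C
      obtain ⟨i, j, hij⟩ : ∃ i j, C i j ≠ 0 := by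
        by_contra h0
        push_neg at h0
        apply hC
        ext i j
        exact h0 i j
      set v : Fin 2 → ℂ := fun k => C k j with hvdef
      have hv : v ≠ 0 := by
        intro h0
        apply hij
        have := congrFun h0 i
        simpa [hvdef] using this
      have hCv : C.mulVec v = 0 := by
        ext k
        have := congrFun (congrFun hC2 k) j
        simp only [Matrix.mul_apply, Matrix.zero_apply, Fin.sum_univ_two] at this
        simp only [Matrix.mulVec, dotProduct, Fin.sum_univ_two, hvdef, Pi.zero_apply]
        exact this
      have key : ∀ X : Matrix (Fin 2) (Fin 2) ℂ, C * X = X.trace • C - X * C →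
          ∃ μ : ℂ, X.mulVec v = μ • v := by
        intro X hX
        have hCXv : C.mulVec (X.mulVec v) = 0 := by
          rw [Matrix.mulVec_mulVec, hX, Matrix.sub_mulVec, Matrix.smul_mulVec, hCv,
            ← Matrix.mulVec_mulVec, hCv, Matrix.mulVec_zero, smul_zero, sub_self]
        exact ker_prop C hC (X.mulVec v) v hCXv hCv hv
      have hA' : C * A = A.trace • C - A * C := by
        have h1 := anticomm_comm A B
        rw [← hCdef] at h1
        exact eq_sub_of_add_eq' h1
      have hB' : C * B = B.trace • C - B * C := by
        have h1 := anticomm_comm B A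
        have h2 : B * A - A * B = -C := by rw [hCdef]; exact (neg_sub _ _).symm
        rw [h2, mul_neg, neg_mul, smul_neg] at h1
        have h3 : -(B * C + C * B) = -(B.trace • C) := by rw [neg_add]; exact h1
        exact eq_sub_of_add_eq' (neg_inj.mp h3)
      obtain ⟨μ, hμ⟩ := key A hA'
      obtain ⟨ν, hν⟩ := key B hB'
      exact ⟨v, hv, ⟨μ, hμ⟩, ⟨ν, hν⟩⟩
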